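/- Let D = {(u, w) ∈ ℝ^p × ℝ^p : u ≤ 0, w ≤ 0, u_i w_i = 0 ∀i}. The Euclidean projection of a point (a, b) ∈ ℝ^p × ℝ^p onto D is given coordinatewise by: if min(a_i, 0)² ≥ min(b_i, 0)² then (min(a_i,0), 0), else (0, min(b_i,0)); this point achieves the minimum distance to D. -/
import Mathlib


open Matrix

set_option maxHeartbeats 1000000 in
lemma complementarity_key (a b u w : ℝ) (hu : u ≤ 0) (hw : w ≤ 0) (huw : u * w = 0) :
    (if (min b 0) ^ 2 ≤ (min a 0) ^ 2 then
      (a - min a 0) ^ 2 + (b - 0) ^ 2 else (a - 0) ^ 2 + (b - min b 0) ^ 2)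
    ≤ (a - u) ^ 2 + (b - w) ^ 2 := by
  have hma := min_le_left a 0
  have hm0 := min_le_right a 0
  have hnb := min_le_left b 0
  have hn0 := min_le_right b 0
  rcases min_choice a 0 with hm | hm <;> rcases min_choice b 0 with hn | hn <;>
    rcases mul_eq_zero.1 huw with h | h <;> split_ifs with hc <;>
    simp only [hm, hn] at hma hm0 hnb hn0 hc ⊢ <;>
    nlinarith [sq_nonneg (a - u), sq_nonneg (b - w), sq_nonneg u, sq_nonneg w, h,
      mul_nonneg (neg_nonneg.2 hu) (neg_nonneg.2 hw)]

theorem complementarity_projection (p : ℕ) (a b : Fin p → ℝ)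
    (u₀ w₀ : Fin p → ℝ)
    (hu₀ : ∀ i, u₀ i = if (min (b i) 0) ^ 2 ≤ (min (a i) 0) ^ 2 then min (a i) 0 else 0)
    (hw₀ : ∀ i, w₀ i = if (min (b i) 0) ^ 2 ≤ (min (a i) 0) ^ 2 then 0 else min (b i) 0) :
    ((∀ i, u₀ i ≤ 0) ∧ (∀ i, w₀ i ≤ 0) ∧ (∀ i, u₀ i * w₀ i = 0)) ∧
    ∀ u w : Fin p → ℝ, (∀ i, u i ≤ 0) → (∀ i, w i ≤ 0) → (∀ i, u i * w i = 0) →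
      ∑ i, ((a i - u₀ i) ^ 2 + (b i - w₀ i) ^ 2) ≤
        ∑ i, ((a i - u i) ^ 2 + (b i - w i) ^ 2) := by
  constructor
  · refine ⟨fun i => ?_, fun i => ?_, fun i => ?_⟩
    · rw [hu₀ i]; split_ifs <;> simp [min_le_right]
    · rw [hw₀ i]; split_ifs <;> simp [min_le_right]
    · rw [hu₀ i, hw₀ i]; split_ifs <;> ring
  · intro u w hu hw huw
    apply Finset.sum_le_sum
    intro i _
    have := complementarity_key (a i) (b i) (u i) (w i) (hu i) (hw i) (huw i)
    rw [hu₀ i, hw₀ i]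
    split_ifs with hc <;> simpa [hc] using this
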